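/- Let G be a connected graph on N vertices with positive edge weights J_{ij}, and let H = Σ_{(i,j)∈E(G)} J_{ij} P_{ij} act on (ℂ^N)^{⊗N}. Then the minimum of ⟨ψ, Hψ⟩ over unit vectors ψ equals −Σ J_{ij}, and the N-level singlet state is the unique (up to phase) minimizer. -/

import Mathlib

open scoped InnerProductSpace

/-- The operator on `(ℂ^d)^{⊗N}` permuting the tensor factors according to `σ`. -/
noncomputable def permOp {d N : ℕ} (σ : Equiv.Perm (Fin N)) :
    EuclideanSpace ℂ (Fin N → Fin d) →ₗ[ℂ] EuclideanSpace ℂ (Fin N → Fin d) where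
  toFun ψ := WithLp.toLp 2 (fun f => ψ (f ∘ σ))
  map_add' _ _ := rfl
  map_smul' _ _ := rfl

/-- The `N`-level singlet `(1/√N!) Σ_{σ∈S_N} sgn(σ) e_{σ(1)} ⊗ ⋯ ⊗ e_{σ(N)}`. -/
noncomputable def singlet (N : ℕ) : EuclideanSpace ℂ (Fin N → Fin N) :=
  ((Real.sqrt N.factorial : ℂ))⁻¹ • ∑ σ : Equiv.Perm (Fin N),
    ((Equiv.Perm.sign σ : ℤ) : ℂ) • EuclideanSpace.single (⇑σ) (1 : ℂ)

section Helpers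

open Complex Equiv Equiv.Perm Finset

lemma permOp_apply {d N : ℕ} (σ : Equiv.Perm (Fin N)) (ψ : EuclideanSpace ℂ (Fin N → Fin d))
    (f : Fin N → Fin d) : permOp σ ψ f = ψ (f ∘ σ) := rfl

lemma permOp_comp {d N : ℕ} (σ τ : Equiv.Perm (Fin N)) (ψ : EuclideanSpace ℂ (Fin N → Fin d)) :
    permOp (σ * τ) ψ = permOp σ (permOp τ ψ) := rfl

lemma sum_comp_perm {d N : ℕ} (σ : Equiv.Perm (Fin N)) (g : (Fin N → Fin d) → ℂ) :
    ∑ f : Fin N → Fin d, g (f ∘ σ) = ∑ f : Fin N → Fin d, g f := by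
  apply Fintype.sum_bijective (fun f : Fin N → Fin d => f ∘ ⇑σ)
  · constructor
    · intro a b hab
      funext x
      simpa using congrFun hab (σ.symm x)
    · intro b
      exact ⟨b ∘ ⇑σ.symm, by funext x; simp⟩
  · intro x; rfl

lemma permOp_inner {d N : ℕ} (σ : Equiv.Perm (Fin N)) (ψ φ : EuclideanSpace ℂ (Fin N → Fin d)) :
    ⟪permOp σ ψ, permOp σ φ⟫_ℂ = ⟪ψ, φ⟫_ℂ := by
  simp only [PiLp.inner_apply, RCLike.inner_apply, permOp_apply]
  exact sum_comp_perm σ (fun f => φ f * (starRingEnd ℂ) (ψ f))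

lemma permOp_norm {d N : ℕ} (σ : Equiv.Perm (Fin N)) (ψ : EuclideanSpace ℂ (Fin N → Fin d)) :
    ‖permOp σ ψ‖ = ‖ψ‖ := by
  have h : ‖permOp σ ψ‖ ^ 2 = ‖ψ‖ ^ 2 := by
    rw [← @inner_self_eq_norm_sq ℂ, ← @inner_self_eq_norm_sq ℂ, permOp_inner]
  nlinarith [norm_nonneg (permOp σ ψ), norm_nonneg ψ]

lemma norm_add_self_perm {N : ℕ} (τ : Equiv.Perm (Fin N)) (ψ : EuclideanSpace ℂ (Fin N → Fin N)) :
    ‖ψ + permOp τ ψ‖ ^ 2 = 2 * ‖ψ‖ ^ 2 + 2 * (⟪ψ, permOp τ ψ⟫_ℂ).re := by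
  have := @norm_add_sq ℂ _ _ _ _ ψ (permOp τ ψ)
  rw [permOp_norm] at this
  rw [this]
  simp [RCLike.re_to_complex]
  ring

lemma re_inner_permOp_ge {N : ℕ} (τ : Equiv.Perm (Fin N)) (ψ : EuclideanSpace ℂ (Fin N → Fin N)) :
    -‖ψ‖ ^ 2 ≤ (⟪ψ, permOp τ ψ⟫_ℂ).re := by
  have h0 : (0:ℝ) ≤ ‖ψ + permOp τ ψ‖ ^ 2 := by positivity
  rw [norm_add_self_perm] at h0
  linarith

lemma permOp_eq_neg_of_eq {N : ℕ} (τ : Equiv.Perm (Fin N)) (ψ : EuclideanSpace ℂ (Fin N → Fin N))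
    (h : (⟪ψ, permOp τ ψ⟫_ℂ).re = -‖ψ‖ ^ 2) : permOp τ ψ = -ψ := by
  have h0 : ‖ψ + permOp τ ψ‖ ^ 2 = 0 := by rw [norm_add_self_perm]; rw [h]; ring
  have : ψ + permOp τ ψ = 0 := by
    have := pow_eq_zero_iff (two_ne_zero) |>.mp h0
    exact norm_eq_zero.mp this
  linear_combination (norm := module) this

end Helpers

section Singlet
open Complex Equiv Equiv.Perm Finset

variable {N : ℕ}

lemma sgn_mul_self (σ : Equiv.Perm (Fin N)) :
    (((Equiv.Perm.sign σ : ℤ) : ℂ)) * ((Equiv.Perm.sign σ : ℤ) : ℂ) = 1 := by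
  rcases Int.units_eq_one_or (Equiv.Perm.sign σ) with h | h <;> rw [h] <;> norm_num

lemma piLp_sum_apply {ι κ : Type*} [DecidableEq ι] (s : Finset ι)
    (g : ι → EuclideanSpace ℂ κ) (x : κ) :
    (∑ i ∈ s, g i) x = ∑ i ∈ s, g i x := by
  induction s using Finset.induction with
  | empty => rfl
  | insert _ _ h ih => rw [Finset.sum_insert h, Finset.sum_insert h, PiLp.add_apply, ih]

lemma permOp_single (σ : Equiv.Perm (Fin N)) (g : Fin N → Fin N) :
    (permOp σ (EuclideanSpace.single g (1:ℂ)) : EuclideanSpace ℂ (Fin N → Fin N))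
      = EuclideanSpace.single (g ∘ ⇑σ⁻¹) (1:ℂ) := by
  ext f
  rw [permOp_apply, EuclideanSpace.single_apply, EuclideanSpace.single_apply]
  congr 1
  simp only [eq_iff_iff]
  constructor
  · intro h; funext x; rw [← h]; simp
  · intro h; rw [h]; funext x; simp

lemma permOp_singlet (σ : Equiv.Perm (Fin N)) :
    permOp σ (singlet N) = ((Equiv.Perm.sign σ : ℤ) : ℂ) • singlet N := by
  unfold singlet
  rw [map_smul, map_sum, smul_comm]
  congr 1
  simp_rw [map_smul, permOp_single]
  rw [Finset.smul_sum]
  apply Fintype.sum_equiv (Equiv.mulRight σ⁻¹)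
    (fun τ => ((Equiv.Perm.sign τ : ℤ) : ℂ) • EuclideanSpace.single (⇑τ ∘ ⇑σ⁻¹) (1:ℂ))
    (fun τ => ((Equiv.Perm.sign σ : ℤ) : ℂ) • (((Equiv.Perm.sign τ : ℤ) : ℂ) • EuclideanSpace.single (⇑τ) (1:ℂ)))
  intro τ
  rw [smul_smul]
  have hfun : ⇑τ ∘ ⇑σ⁻¹ = ⇑(Equiv.mulRight σ⁻¹ τ) := by
    funext x; simp [Equiv.Perm.mul_apply]
  rw [hfun]
  congr 1
  have : Equiv.Perm.sign (Equiv.mulRight σ⁻¹ τ) = Equiv.Perm.sign τ * Equiv.Perm.sign σ := by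
    simp [Equiv.mulRight, Equiv.Perm.sign_mul, mul_comm]
  rw [this]
  push_cast
  rcases Int.units_eq_one_or (Equiv.Perm.sign σ) with h | h <;>
    rcases Int.units_eq_one_or (Equiv.Perm.sign τ) with h' | h' <;>
    rw [h, h'] <;> norm_num

end Singlet

section Singlet2
open Complex Equiv Equiv.Perm Finset

variable {N : ℕ}

lemma sqrtFact_ne_zero (N : ℕ) : ((Real.sqrt N.factorial : ℂ)) ≠ 0 := by
  have : (0:ℝ) < Real.sqrt N.factorial := Real.sqrt_pos.mpr (by positivity)
  exact_mod_cast ne_of_gt this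

lemma inner_singlet_self (N : ℕ) : ⟪singlet N, singlet N⟫_ℂ = 1 := by
  unfold singlet
  rw [inner_smul_left, inner_smul_right]
  have horth : Orthonormal ℂ (fun σ : Equiv.Perm (Fin N) =>
      EuclideanSpace.single (⇑σ) (1:ℂ)) := by
    apply (EuclideanSpace.orthonormal_single (𝕜 := ℂ) (ι := Fin N → Fin N)).comp
    intro a b hab
    exact Equiv.coe_fn_injective hab
  rw [horth.inner_sum]
  have hsum : ∑ σ : Equiv.Perm (Fin N),
      (starRingEnd ℂ) ((Equiv.Perm.sign σ : ℤ) : ℂ) * ((Equiv.Perm.sign σ : ℤ) : ℂ)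
      = (N.factorial : ℂ) := by
    have : ∀ σ : Equiv.Perm (Fin N),
        (starRingEnd ℂ) ((Equiv.Perm.sign σ : ℤ) : ℂ) * ((Equiv.Perm.sign σ : ℤ) : ℂ) = 1 := by
      intro σ
      rw [map_intCast]
      exact sgn_mul_self σ
    rw [Finset.sum_congr rfl (fun σ _ => this σ)]
    simp [Fintype.card_perm]
  rw [hsum, Complex.conj_inv, Complex.conj_ofReal]
  have h2 : ((Real.sqrt N.factorial : ℝ) : ℂ) * ((Real.sqrt N.factorial : ℝ) : ℂ)
      = (N.factorial : ℂ) := by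
    rw [← Complex.ofReal_mul, Real.mul_self_sqrt (by positivity)]
    push_cast; ring
  field_simp
  rw [sq, h2]
  exact div_self (by exact_mod_cast Nat.factorial_ne_zero N)

lemma norm_singlet (N : ℕ) : ‖singlet N‖ = 1 := by
  have h : ‖singlet N‖ ^ 2 = 1 := by
    rw [← @inner_self_eq_norm_sq ℂ, inner_singlet_self]
    simp
  nlinarith [norm_nonneg (singlet N)]

lemma singlet_apply (N : ℕ) (f : Fin N → Fin N) :
    singlet N f = ((Real.sqrt N.factorial : ℂ))⁻¹ *
      ∑ σ : Equiv.Perm (Fin N), ((Equiv.Perm.sign σ : ℤ) : ℂ) * (if f = ⇑σ then 1 else 0) := by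
  unfold singlet
  rw [PiLp.smul_apply, piLp_sum_apply, smul_eq_mul]
  congr 1
  apply Finset.sum_congr rfl
  intro σ _
  rw [PiLp.smul_apply, EuclideanSpace.single_apply, smul_eq_mul]

lemma singlet_apply_notbij (N : ℕ) (f : Fin N → Fin N) (hf : ¬ Function.Bijective f) :
    singlet N f = 0 := by
  rw [singlet_apply]
  rw [Finset.sum_eq_zero, mul_zero]
  intro σ _
  rw [if_neg, mul_zero]
  intro h
  exact hf (h ▸ σ.bijective)

lemma singlet_apply_perm (N : ℕ) (σ : Equiv.Perm (Fin N)) :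
    singlet N ⇑σ = ((Real.sqrt N.factorial : ℂ))⁻¹ * ((Equiv.Perm.sign σ : ℤ) : ℂ) := by
  rw [singlet_apply]
  congr 1
  rw [Finset.sum_congr rfl (g := fun τ => if τ = σ then ((Equiv.Perm.sign τ : ℤ) : ℂ) else 0)]
  · rw [Finset.sum_ite_eq' Finset.univ σ]
    simp
  · intro τ _
    by_cases h : τ = σ
    · subst h; simp
    · rw [if_neg h, if_neg, mul_zero]
      intro hc
      exact h (Equiv.coe_fn_injective hc.symm)

end Singlet2


/-- For a connected graph `G` on `N` vertices with positive symmetric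
edge weights `J`, and `H = Σ_{edges} J_{ij} P_{ij}` on `(ℂ^N)^{⊗N}` (here each
edge is counted once in each orientation, in both `H` and the bound), the minimum
of `⟪ψ, H ψ⟫` over unit vectors equals `−Σ J_{ij}`, it is attained by the
`N`-level singlet, and the singlet is the unique minimizer up to a phase. -/
theorem singlet_unique_ground_state
    {N : ℕ} (G : SimpleGraph (Fin N)) [DecidableRel G.Adj] (hG : G.Connected)
    (J : Fin N → Fin N → ℝ) (hJpos : ∀ i j, G.Adj i j → 0 < J i j)
    (hJsymm : ∀ i j, J i j = J j i)
    (H : EuclideanSpace ℂ (Fin N → Fin N) →ₗ[ℂ] EuclideanSpace ℂ (Fin N → Fin N))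
    (hH : H = ∑ p ∈ Finset.univ.filter (fun p : Fin N × Fin N => G.Adj p.1 p.2),
      (J p.1 p.2 : ℂ) • permOp (Equiv.swap p.1 p.2)) :
    (∀ ψ : EuclideanSpace ℂ (Fin N → Fin N), ‖ψ‖ = 1 →
      -(∑ p ∈ Finset.univ.filter (fun p : Fin N × Fin N => G.Adj p.1 p.2), J p.1 p.2)
        ≤ (⟪ψ, H ψ⟫_ℂ).re) ∧
    (⟪singlet N, H (singlet N)⟫_ℂ).re =
      -(∑ p ∈ Finset.univ.filter (fun p : Fin N × Fin N => G.Adj p.1 p.2), J p.1 p.2) ∧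
    (∀ ψ : EuclideanSpace ℂ (Fin N → Fin N), ‖ψ‖ = 1 →
      (⟪ψ, H ψ⟫_ℂ).re =
        -(∑ p ∈ Finset.univ.filter (fun p : Fin N × Fin N => G.Adj p.1 p.2), J p.1 p.2) →
      ∃ c : ℂ, ‖c‖ = 1 ∧ ψ = c • singlet N) := by
  subst hH
  set E := Finset.univ.filter (fun p : Fin N × Fin N => G.Adj p.1 p.2) with hE
  have hmem : ∀ p : Fin N × Fin N, p ∈ E → G.Adj p.1 p.2 := by
    intro p hp
    exact (Finset.mem_filter.mp hp).2
  -- expansion of the quadratic form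
  have hExpand : ∀ ψ : EuclideanSpace ℂ (Fin N → Fin N),
      (⟪ψ, (∑ p ∈ E, (J p.1 p.2 : ℂ) • permOp (Equiv.swap p.1 p.2)) ψ⟫_ℂ).re
        = ∑ p ∈ E, J p.1 p.2 * (⟪ψ, permOp (Equiv.swap p.1 p.2) ψ⟫_ℂ).re := by
    intro ψ
    rw [LinearMap.sum_apply, inner_sum, Complex.re_sum]
    apply Finset.sum_congr rfl
    intro p _
    rw [LinearMap.smul_apply, inner_smul_right]
    simp [Complex.mul_re]
  constructor
  · -- lower bound
    intro ψ hψ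
    rw [hExpand]
    have : -(∑ p ∈ E, J p.1 p.2) = ∑ p ∈ E, -(J p.1 p.2) := by
      rw [Finset.sum_neg_distrib]
    rw [this]
    apply Finset.sum_le_sum
    intro p hp
    have hJ := hJpos p.1 p.2 (hmem p hp)
    have hr : -1 ≤ (⟪ψ, permOp (Equiv.swap p.1 p.2) ψ⟫_ℂ).re := by
      have := re_inner_permOp_ge (Equiv.swap p.1 p.2) ψ
      rw [hψ] at this
      simpa using this
    nlinarith
  have hsign : ∀ p : Fin N × Fin N, p ∈ E →
      permOp (Equiv.swap p.1 p.2) (singlet N) = -singlet N := by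
    intro p hp
    rw [permOp_singlet, Equiv.Perm.sign_swap (G.ne_of_adj (hmem p hp))]
    simp
  constructor
  · -- value on the singlet
    rw [hExpand]
    have : ∀ p ∈ E, J p.1 p.2 * (⟪singlet N, permOp (Equiv.swap p.1 p.2) (singlet N)⟫_ℂ).re
        = -(J p.1 p.2) := by
      intro p hp
      rw [hsign p hp, inner_neg_right, inner_singlet_self]
      simp
    rw [Finset.sum_congr rfl this, Finset.sum_neg_distrib]
  · -- uniqueness
    intro ψ hψ heq
    rw [hExpand] at heq
    have hle : ∀ p ∈ E, -(J p.1 p.2) ≤ J p.1 p.2 * (⟪ψ, permOp (Equiv.swap p.1 p.2) ψ⟫_ℂ).re := by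
      intro p hp
      have hJ := hJpos p.1 p.2 (hmem p hp)
      have hr : -1 ≤ (⟪ψ, permOp (Equiv.swap p.1 p.2) ψ⟫_ℂ).re := by
        have := re_inner_permOp_ge (Equiv.swap p.1 p.2) ψ
        rw [hψ] at this
        simpa using this
      nlinarith
    have heq' : ∑ p ∈ E, -(J p.1 p.2)
        = ∑ p ∈ E, J p.1 p.2 * (⟪ψ, permOp (Equiv.swap p.1 p.2) ψ⟫_ℂ).re := by
      rw [Finset.sum_neg_distrib, heq]
    have hterm := (Finset.sum_eq_sum_iff_of_le hle).mp heq'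
    -- each adjacent swap acts as -1
    have hadj : ∀ i j : Fin N, G.Adj i j → permOp (Equiv.swap i j) ψ = -ψ := by
      intro i j hij
      have hpE : ((i, j) : Fin N × Fin N) ∈ E := by
        rw [hE, Finset.mem_filter]
        exact ⟨Finset.mem_univ _, hij⟩
      have h1 := (hterm (i, j) hpE).symm
      have hJ := hJpos i j hij
      have hr : (⟪ψ, permOp (Equiv.swap i j) ψ⟫_ℂ).re = -1 := by
        have : J i j * (⟪ψ, permOp (Equiv.swap i j) ψ⟫_ℂ).re = J i j * (-1) := by
          rw [h1]; ring
        exact mul_left_cancel₀ (ne_of_gt hJ) this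
      apply permOp_eq_neg_of_eq
      rw [hψ, hr]; norm_num
    -- antisymmetry under every permutation
    have hall : ∀ σ : Equiv.Perm (Fin N),
        permOp σ ψ = ((Equiv.Perm.sign σ : ℤ) : ℂ) • ψ := by
      have hQ1 : permOp (1 : Equiv.Perm (Fin N)) ψ = ((Equiv.Perm.sign (1 : Equiv.Perm (Fin N)) : ℤ) : ℂ) • ψ := by
        simp only [map_one, Units.val_one, Int.cast_one, one_smul]
        rfl
      have hQmul : ∀ σ τ : Equiv.Perm (Fin N),
          permOp σ ψ = ((Equiv.Perm.sign σ : ℤ) : ℂ) • ψ →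
          permOp τ ψ = ((Equiv.Perm.sign τ : ℤ) : ℂ) • ψ →
          permOp (σ * τ) ψ = ((Equiv.Perm.sign (σ * τ) : ℤ) : ℂ) • ψ := by
        intro σ τ hσ hτ
        rw [permOp_comp, hτ, map_smul, hσ, smul_smul, Equiv.Perm.sign_mul]
        congr 1
        push_cast
        ring
      have hadjQ : ∀ i j : Fin N, G.Adj i j →
          permOp (Equiv.swap i j) ψ = ((Equiv.Perm.sign (Equiv.swap i j) : ℤ) : ℂ) • ψ := by
        intro i j hij
        rw [hadj i j hij, Equiv.Perm.sign_swap (G.ne_of_adj hij)]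
        simp
      have hwalk : ∀ (a b : Fin N), G.Walk a b → a ≠ b →
          permOp (Equiv.swap a b) ψ = ((Equiv.Perm.sign (Equiv.swap a b) : ℤ) : ℂ) • ψ := by
        intro a b w
        induction w with
        | nil => intro h; exact absurd rfl h
        | @cons u v c h p ih =>
          intro huc
          by_cases hvc : v = c
          · subst hvc
            exact hadjQ _ _ h
          · have hQuv := hadjQ u v h
            have hQvc := ih hvc
            have hid : Equiv.swap v u * Equiv.swap c v * Equiv.swap v u = Equiv.swap u c :=
              Equiv.swap_mul_swap_mul_swap (fun hcv => hvc hcv.symm) (fun hcu => huc hcu.symm)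
            rw [← hid]
            rw [Equiv.swap_comm v u, Equiv.swap_comm c v]
            exact hQmul _ _ (hQmul _ _ hQuv hQvc) hQuv
      have hswapQ : ∀ a b : Fin N, a ≠ b →
          permOp (Equiv.swap a b) ψ = ((Equiv.Perm.sign (Equiv.swap a b) : ℤ) : ℂ) • ψ := by
        intro a b hab
        obtain ⟨w⟩ := hG.preconnected a b
        exact hwalk a b w hab
      intro σ
      exact Equiv.Perm.swap_induction_on σ hQ1
        (fun π x y hxy hπ => hQmul _ _ (hswapQ x y hxy) hπ)
    -- conclude ψ is a multiple of the singlet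
    set c : ℂ := ψ id * (Real.sqrt N.factorial : ℂ) with hc
    have hpsi : ψ = c • singlet N := by
      ext f
      rw [PiLp.smul_apply, smul_eq_mul]
      by_cases hf : Function.Bijective f
      · set σ₀ := Equiv.ofBijective f hf with hσ₀
        have hfσ : f = ⇑σ₀ := rfl
        have h1 := congrFun (congrArg WithLp.ofLp (hall σ₀)) id
        rw [permOp_apply] at h1
        have hidσ : (id : (Fin N → Fin N)) ∘ ⇑σ₀ = f := by funext x; rfl
        rw [hidσ] at h1
        have h2 : (((Equiv.Perm.sign σ₀ : ℤ) : ℂ) • ψ) id = ((Equiv.Perm.sign σ₀ : ℤ) : ℂ) * ψ id := by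
          rw [PiLp.smul_apply, smul_eq_mul]
        rw [h2] at h1
        rw [h1, hfσ, singlet_apply_perm, hc]
        have hs := sqrtFact_ne_zero N
        field_simp
      · rw [singlet_apply_notbij N f hf, mul_zero]
        have hninj : ¬ Function.Injective f := fun hinj => hf (Finite.injective_iff_bijective.mp hinj)
        obtain ⟨i, j, hfij, hij⟩ := Function.not_injective_iff.mp hninj
        have hcomp : f ∘ ⇑(Equiv.swap i j) = f := by
          funext x
          rcases eq_or_ne x i with rfl | hxi
          · simp only [Function.comp_apply, Equiv.swap_apply_left]
            exact hfij.symm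
          rcases eq_or_ne x j with rfl | hxj
          · simp only [Function.comp_apply, Equiv.swap_apply_right]
            exact hfij
          · simp only [Function.comp_apply, Equiv.swap_apply_of_ne_of_ne hxi hxj]
        have h1 := congrFun (congrArg WithLp.ofLp (hall (Equiv.swap i j))) f
        rw [permOp_apply, hcomp, Equiv.Perm.sign_swap hij] at h1
        have h2 : ((((-1 : ℤˣ) : ℤ) : ℂ) • ψ) f = -ψ f := by
          rw [PiLp.smul_apply]
          simp
        rw [h2] at h1
        exact CharZero.eq_neg_self_iff.mp h1
    refine ⟨c, ?_, hpsi⟩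
    have := hψ
    rw [hpsi, norm_smul, norm_singlet, mul_one] at this
    exact this
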